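/- Let C and D be triangulated categories with weight structures w and v respectively, and let F : C ⇄ D : G be an adjoint pair of exact functors (F left adjoint to G). Then F is right weight-exact (F(C^{w≥0}) ⊆ D^{v≥0}) if and only if G is left weight-exact (G(D^{v≤0}) ⊆ C^{w≤0}). -/

import Mathlib

open CategoryTheory Category Limits Pretriangulated

/-- `X` is a retract of `Y`. -/
def IsRetract {C : Type*} [Category C] (X Y : C) : Prop :=
  ∃ (i : X ⟶ Y) (r : Y ⟶ X), i ≫ r = 𝟙 X

/-- A weight structure on a triangulated category `C`, given by the pair of classes
`le = C^{w≤0}` and `ge = C^{w≥0}` (Bondarko). -/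
structure IsWeightStructure (C : Type*) [Category C] [HasZeroObject C] [HasShift C ℤ]
    [Preadditive C] [∀ n : ℤ, (shiftFunctor C n).Additive] [Pretriangulated C]
    (le ge : Set C) : Prop where
  le_retract : ∀ ⦃X Y : C⦄, Y ∈ le → IsRetract X Y → X ∈ le
  ge_retract : ∀ ⦃X Y : C⦄, Y ∈ ge → IsRetract X Y → X ∈ ge
  le_shift : ∀ ⦃X : C⦄, X ∈ le → X⟦(1 : ℤ)⟧ ∈ le
  ge_shift : ∀ ⦃X : C⦄, X ∈ ge → X⟦(-1 : ℤ)⟧ ∈ ge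
  orth : ∀ ⦃X Y : C⦄, X ∈ ge → Y ∈ le → ∀ f : X ⟶ Y⟦(1 : ℤ)⟧, f = 0
  decomp : ∀ M : C, ∃ (A B : C) (_ : A ∈ le) (_ : B ∈ ge)
    (f : M ⟶ A) (g : A ⟶ B) (h : B ⟶ M⟦(1 : ℤ)⟧), Triangle.mk f g h ∈ distTriang C
variable {C : Type*} [Category C] [HasZeroObject C] [HasShift C ℤ]
  [Preadditive C] [∀ n : ℤ, (shiftFunctor C n).Additive] [Pretriangulated C]
variable {D : Type*} [Category D] [HasZeroObject D] [HasShift D ℤ]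
  [Preadditive D] [∀ n : ℤ, (shiftFunctor D n).Additive] [Pretriangulated D]

/-- `C^{w≤0}` is the right orthogonal of `C^{w≥1}`: if all maps from weight `≥ 0` objects
to `M⟦1⟧` vanish, then `M ∈ leC`. -/
lemma mem_le_of_orth {leC geC : Set C} (w : IsWeightStructure C leC geC) {M : C}
    (hM : ∀ X ∈ geC, ∀ f : X ⟶ M⟦(1 : ℤ)⟧, f = 0) : M ∈ leC := by
  obtain ⟨A, B, hA, hB, f, g, h, hT⟩ := w.decomp M
  have hzero : h = 0 := hM B hB h
  -- the inverse rotation of the triangle has zero first morphism, so `f` is a split mono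
  obtain ⟨r, hr⟩ := Triangle.yoneda_exact₂ _ (inv_rot_of_distTriang _ hT) (𝟙 M)
    (by change (-(h⟦(-1 : ℤ)⟧') ≫ (shiftFunctorCompIsoId C (1 : ℤ) (-1) (by omega)).hom.app M) ≫ 𝟙 M = 0; rw [hzero]; simp)
  exact w.le_retract hA ⟨f, r, hr.symm⟩

/-- `C^{w≥0}` is the left orthogonal of `C^{w≤-1}`: if all maps from `M` to `Y⟦1⟧` for
`Y` of weight `≤ 0` vanish, then `M ∈ geC`. -/
lemma mem_ge_of_orth {leC geC : Set C} (w : IsWeightStructure C leC geC) {M : C}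
    (hM : ∀ Y ∈ leC, ∀ f : M ⟶ Y⟦(1 : ℤ)⟧, f = 0) : M ∈ geC := by
  obtain ⟨A, B, hA, hB, u, v, ww, hT⟩ := w.decomp (M⟦(-1 : ℤ)⟧)
  have e : M⟦(-1 : ℤ)⟧⟦(1 : ℤ)⟧ ≅ M := shiftNegShift M (1 : ℤ)
  have hu1 : e.inv ≫ u⟦(1 : ℤ)⟧' = 0 := hM A hA _
  have hu' : u⟦(1 : ℤ)⟧' = 0 := by
    rw [← cancel_epi e.inv, hu1, comp_zero]
  have hu : u = 0 := by
    apply (shiftFunctor C (1 : ℤ)).map_injective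
    rw [hu', Functor.map_zero]
  -- `ww : B ⟶ M⟦-1⟧⟦1⟧` is a split epi
  obtain ⟨s, hs⟩ : ∃ s : M⟦(-1 : ℤ)⟧⟦(1 : ℤ)⟧ ⟶ B, 𝟙 _ = s ≫ ww :=
    Triangle.coyoneda_exact₁ _ hT (𝟙 (M⟦(-1 : ℤ)⟧⟦(1 : ℤ)⟧))
    (by change 𝟙 (M⟦(-1 : ℤ)⟧⟦(1 : ℤ)⟧) ≫ u⟦(1 : ℤ)⟧' = 0; rw [hu, Functor.map_zero, comp_zero])
  refine w.ge_retract hB ⟨e.inv ≫ s, ww ≫ e.hom, ?_⟩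
  have : s ≫ ww = 𝟙 _ := by
    rw [← hs]
  rw [assoc, ← assoc s, this, id_comp, Iso.inv_hom_id]

/-- For an adjoint pair `F ⊣ G` of exact functors between triangulated categories with
weight structures `w` (on `C`) and `v` (on `D`), `F` is right weight-exact if and only
if `G` is left weight-exact. -/
theorem rightWeightExact_iff_leftWeightExact_of_adjunction
    (leC geC : Set C) (leD geD : Set D)
    (w : IsWeightStructure C leC geC) (v : IsWeightStructure D leD geD)
    (F : C ⥤ D) (G : D ⥤ C) [F.CommShift ℤ] [F.IsTriangulated]
    [G.CommShift ℤ] [G.IsTriangulated] (adj : F ⊣ G) :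
    (∀ X ∈ geC, F.obj X ∈ geD) ↔ (∀ Y ∈ leD, G.obj Y ∈ leC) := by
  constructor
  · intro hF Y hY
    apply mem_le_of_orth w
    intro X hX f
    -- transport `f` through the commutation of `G` with shifts and the adjunction
    have hiso : (G.obj Y)⟦(1 : ℤ)⟧ ≅ G.obj (Y⟦(1 : ℤ)⟧) := (G.commShiftIso (1 : ℤ)).symm.app Y
    have h0 : (adj.homEquiv X (Y⟦(1 : ℤ)⟧)).symm (f ≫ hiso.hom) = 0 :=
      v.orth (hF X hX) hY _
    have : f ≫ hiso.hom = 0 := by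
      have := congrArg (adj.homEquiv X (Y⟦(1 : ℤ)⟧)) h0
      rw [Equiv.apply_symm_apply] at this
      rw [this, Adjunction.homEquiv_apply, Functor.map_zero, comp_zero]
    rw [← cancel_mono hiso.hom, this, zero_comp]
  · intro hG X hX
    apply mem_ge_of_orth v
    intro Y hY f
    have hiso : G.obj (Y⟦(1 : ℤ)⟧) ≅ (G.obj Y)⟦(1 : ℤ)⟧ := (G.commShiftIso (1 : ℤ)).app Y
    have h0 : adj.homEquiv X (Y⟦(1 : ℤ)⟧) f ≫ hiso.hom = 0 :=
      w.orth hX (hG Y hY) _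
    have hg : adj.homEquiv X (Y⟦(1 : ℤ)⟧) f = 0 := by
      rw [← cancel_mono hiso.hom, h0, zero_comp]
    have := congrArg (adj.homEquiv X (Y⟦(1 : ℤ)⟧)).symm hg
    rw [Equiv.symm_apply_apply] at this
    rw [this, Adjunction.homEquiv_symm_apply, Functor.map_zero, zero_comp]
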